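/- Fix L ≥ 3, n ≥ 2, w* > 0, d > 0, and let a = (2−L)/L. For each C < 0 let σ_i(C) be the unique solution in (0, w*d/(n−1)) of (w*d − (n−1)σ)^a − σ^a = C, and set σ₁(C) = w*d − (n−1)σ_i(C). Then as C → −∞, σ_i(C) → 0 and σ₁(C) → w*d; consequently the ratio (σ₁² + (n−1)σ_i²)/σ₁² converges to 1. -/

import Mathlib

open Filter Real

/-- As the constant C → −∞, the unique solution σᵢ(C) ∈ (0, w*d/(n−1)) of
(w*d − (n−1)σ)^a − σ^a = C tends to 0, σ₁(C) = w*d − (n−1)σᵢ(C) tends to w*d,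
and the stable rank (σ₁² + (n−1)σᵢ²)/σ₁² tends to 1. -/
theorem stable_rank_tendsto_one (L n : ℕ) (hL : 3 ≤ L) (hn : 2 ≤ n)
    (w d : ℝ) (hw : 0 < w) (hd : 0 < d)
    (a : ℝ) (ha : a = ((2 : ℝ) - L) / L)
    (σi σ1 : ℝ → ℝ)
    (hσi : ∀ C < (0 : ℝ), σi C ∈ Set.Ioo 0 (w * d / ((n : ℝ) - 1)) ∧
      (w * d - ((n : ℝ) - 1) * σi C) ^ a - (σi C) ^ a = C)
    (hσ1 : ∀ C : ℝ, σ1 C = w * d - ((n : ℝ) - 1) * σi C) :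
    Filter.Tendsto σi Filter.atBot (nhds 0) ∧
    Filter.Tendsto σ1 Filter.atBot (nhds (w * d)) ∧
    Filter.Tendsto (fun C => ((σ1 C) ^ 2 + ((n : ℝ) - 1) * (σi C) ^ 2) / (σ1 C) ^ 2)
      Filter.atBot (nhds 1) := by
  have hLpos : (0 : ℝ) < (L : ℝ) := by positivity
  have haneg : a < 0 := by
    rw [ha]
    apply div_neg_of_neg_of_pos _ hLpos
    have : (3 : ℝ) ≤ (L : ℝ) := by exact_mod_cast hL
    linarith
  have hane : a ≠ 0 := ne_of_lt haneg
  have hinvneg : 1 / a < 0 := div_neg_of_pos_of_neg one_pos haneg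
  have hn1 : (0 : ℝ) < (n : ℝ) - 1 := by
    have : (2 : ℝ) ≤ (n : ℝ) := by exact_mod_cast hn
    linarith
  have hK : (0 : ℝ) < w * d := by positivity
  set K := w * d with hKdef
  -- upper bound for σi C
  have hbound : ∀ C < (0 : ℝ), σi C ≤ (K ^ a - C) ^ (1 / a) := by
    intro C hC
    obtain ⟨⟨hpos, hlt⟩, heq⟩ := hσi C hC
    have hrem : 0 < K - ((n : ℝ) - 1) * σi C := by
      have := (lt_div_iff₀ hn1).mp hlt
      linarith
    have h1 : K ^ a ≤ (K - ((n : ℝ) - 1) * σi C) ^ a := by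
      apply Real.rpow_le_rpow_of_nonpos hrem _ haneg.le
      nlinarith
    have h2 : K ^ a - C ≤ (σi C) ^ a := by linarith
    have hKaC : 0 < K ^ a - C := by
      have : 0 < K ^ a := Real.rpow_pos_of_pos hK a
      linarith
    have h3 : ((σi C) ^ a) ^ (1 / a) ≤ (K ^ a - C) ^ (1 / a) :=
      Real.rpow_le_rpow_of_nonpos hKaC h2 hinvneg.le
    calc σi C = ((σi C) ^ a) ^ (1 / a) := by
          rw [← Real.rpow_mul hpos.le, mul_one_div, div_self hane, Real.rpow_one]
      _ ≤ _ := h3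
  -- the upper bound tends to 0
  have hub : Tendsto (fun C => (K ^ a - C) ^ (1 / a)) atBot (nhds 0) := by
    have h1 : Tendsto (fun C : ℝ => K ^ a - C) atBot atTop :=
      tendsto_atTop_add_const_left _ _ tendsto_neg_atBot_atTop
    have h2 : Tendsto (fun x : ℝ => x ^ (1 / a)) atTop (nhds 0) := by
      have := tendsto_rpow_neg_atTop (y := -(1 / a)) (by linarith)
      simpa using this
    exact h2.comp h1
  have hσi0 : Tendsto σi atBot (nhds 0) := by
    apply tendsto_of_tendsto_of_tendsto_of_le_of_le' tendsto_const_nhds hub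
    · filter_upwards [eventually_lt_atBot (0 : ℝ)] with C hC
      exact ((hσi C hC).1.1).le
    · filter_upwards [eventually_lt_atBot (0 : ℝ)] with C hC
      exact hbound C hC
  have hσ1K : Tendsto σ1 atBot (nhds K) := by
    have : Tendsto (fun C => K - ((n : ℝ) - 1) * σi C) atBot (nhds (K - ((n : ℝ) - 1) * 0)) :=
      tendsto_const_nhds.sub (tendsto_const_nhds.mul hσi0)
    simp only [mul_zero, sub_zero] at this
    exact this.congr fun C => (hσ1 C).symm
  refine ⟨hσi0, hσ1K, ?_⟩
  have hnum : Tendsto (fun C => (σ1 C) ^ 2 + ((n : ℝ) - 1) * (σi C) ^ 2) atBot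
      (nhds (K ^ 2 + ((n : ℝ) - 1) * 0 ^ 2)) :=
    ((hσ1K.pow 2).add (tendsto_const_nhds.mul (hσi0.pow 2)))
  have hden : Tendsto (fun C => (σ1 C) ^ 2) atBot (nhds (K ^ 2)) := hσ1K.pow 2
  have := hnum.div hden (by positivity)
  have hval : (K ^ 2 + ((n : ℝ) - 1) * 0 ^ 2) / K ^ 2 = 1 := by
    field_simp
    simp
  rwa [hval] at this
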